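/- Let 𝒜 = {A₁, …, A_L} be a dynamical generating set of N×N matrices such that A_j² = −I for every j ∈ [L], and such that for all j, k ∈ [L] either A_jA_k = A_kA_j or A_jA_k = −A_kA_j (these conditions hold when each A_j is i times an n-qubit Pauli string). Assume the anticommutation graph of 𝒜 — the simple graph on vertex set [L] with an edge between j and k whenever A_jA_k = −A_kA_j — is connected. Let χ be a Hermitian M×M complex matrix with exactly K distinct eigenvalues. Then for every i ∈ [L], the DLA g_{𝒜_i} generated by 𝒜_i = {A₁ ⊗ I_M, …, A_L ⊗ I_M, A_i ⊗ χ} is isomorphic, as a real Lie algebra, to the direct sum ⊕_{j=1}^{K} g_𝒜 of K copies of g_𝒜. -/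

import Mathlib

open Matrix Kronecker

attribute [local instance 100] LieRing.ofAssociativeRing

/-- A *dynamical generating set*: a family of at least two ℝ-linearly independent,
traceless, anti-Hermitian complex matrices of a common size. -/
def IsDynGenSet {l N : ℕ} (A : Fin l → Matrix (Fin N) (Fin N) ℂ) : Prop :=
  2 ≤ l ∧ LinearIndependent ℝ A ∧ (∀ i, Matrix.trace (A i) = 0) ∧ (∀ i, (A i)ᴴ = -(A i))

/-- The dynamical Lie algebra generated by a set of matrices: the smallest real Lie
subalgebra of the matrix Lie algebra (bracket `[A,B] = AB - BA`) containing the set. -/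
noncomputable def DLA {n : Type*} [Fintype n] [DecidableEq n] (S : Set (Matrix n n ℂ)) :
    LieSubalgebra ℝ (Matrix n n ℂ) :=
  LieSubalgebra.lieSpan ℝ (Matrix n n ℂ) S

/-- The commutator subalgebra `[g,g]`, as the ℝ-linear span of brackets of elements of `g`. -/
noncomputable def commSub {n : Type*} [Fintype n] [DecidableEq n]
    (g : LieSubalgebra ℝ (Matrix n n ℂ)) : Submodule ℝ (Matrix n n ℂ) :=
  Submodule.span ℝ {x | ∃ u ∈ g, ∃ v ∈ g, x = ⁅u, v⁆}

/-- The center `Z(g) = {u ∈ g : [u,v] = 0 for all v ∈ g}`, as an ℝ-submodule. -/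
noncomputable def centerSubmodule {n : Type*} [Fintype n] [DecidableEq n]
    (g : LieSubalgebra ℝ (Matrix n n ℂ)) : Submodule ℝ (Matrix n n ℂ) where
  carrier := {u | u ∈ g ∧ ∀ v ∈ g, ⁅u, v⁆ = 0}
  add_mem' := by
    rintro a b ⟨ha, ha'⟩ ⟨hb, hb'⟩
    exact ⟨g.add_mem ha hb, fun v hv => by rw [add_lie, ha' v hv, hb' v hv, add_zero]⟩
  zero_mem' := ⟨g.zero_mem, fun v _ => zero_lie v⟩
  smul_mem' := by
    rintro c a ⟨ha, ha'⟩
    exact ⟨g.smul_mem c ha, fun v hv => by rw [smul_lie, ha' v hv, smul_zero]⟩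
open scoped DirectSum

/-- The anticommutation graph of a family of matrices: vertices are indices, with an edge
between `j` and `k` whenever `A_j` and `A_k` anticommute. -/
def anticommGraph {l N : ℕ} (A : Fin l → Matrix (Fin N) (Fin N) ℂ) : SimpleGraph (Fin l) :=
  SimpleGraph.fromRel fun j k => A j * A k = -(A k * A j)

open Matrix Kronecker

namespace Stmt13Aux

section LieGeneric
variable {L L' : Type*} [LieRing L] [LieAlgebra ℝ L] [LieRing L'] [LieAlgebra ℝ L']

lemma map_lieSpan (f : L →ₗ⁅ℝ⁆ L') (S : Set L) :
    (LieSubalgebra.lieSpan ℝ L S).map f = LieSubalgebra.lieSpan ℝ L' (⇑f '' S) := by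
  apply le_antisymm
  · rw [LieSubalgebra.map_le_iff_le_comap, LieSubalgebra.lieSpan_le]
    intro x hx
    exact LieSubalgebra.subset_lieSpan (Set.mem_image_of_mem _ hx)
  · rw [LieSubalgebra.lieSpan_le]
    rintro _ ⟨x, hx, rfl⟩
    exact ⟨x, LieSubalgebra.subset_lieSpan hx, rfl⟩

/-- Restriction of an injective Lie algebra morphism to an isomorphism onto the image of a
subalgebra. -/
noncomputable def equivMap (f : L →ₗ⁅ℝ⁆ L') (hf : Function.Injective f)
    (K : LieSubalgebra ℝ L) : K ≃ₗ⁅ℝ⁆ K.map f := by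
  have hmem : ∀ x : K, f ↑x ∈ K.map f := fun x => ⟨x.1, x.2, rfl⟩
  have hsurj : ∀ y : K.map f, ∃ x : K, f ↑x = ↑y := by
    rintro ⟨y, hy⟩
    obtain ⟨x, hx, hfx⟩ : ∃ x ∈ K, f x = y := hy
    exact ⟨⟨x, hx⟩, hfx⟩
  choose inv hinv using hsurj
  exact
    { toFun := fun x => ⟨f ↑x, hmem x⟩
      map_add' := fun x y => Subtype.ext (f.map_add x y)
      map_smul' := fun t x => Subtype.ext (f.map_smul t x)
      map_lie' := fun {x y} => Subtype.ext (f.map_lie x y)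
      invFun := inv
      left_inv := fun x => Subtype.ext (hf (hinv ⟨f ↑x, hmem x⟩))
      right_inv := fun y => Subtype.ext (hinv y) }

end LieGeneric

/-- Conjugation by a unit as an algebra automorphism. -/
def conjAut {A : Type*} [Ring A] [Algebra ℝ A] (u : Aˣ) : A ≃ₐ[ℝ] A where
  toFun x := ↑u * x * ↑u⁻¹
  invFun x := ↑u⁻¹ * x * ↑u
  left_inv x := by simp [mul_assoc]
  right_inv x := by simp [mul_assoc]
  map_mul' x y := by simp [mul_assoc]
  map_add' x y := by
    show ↑u * (x + y) * ↑u⁻¹ = ↑u * x * ↑u⁻¹ + ↑u * y * ↑u⁻¹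
    rw [mul_add, add_mul]
  commutes' r := by
    simp [Algebra.algebraMap_eq_smul_one, mul_smul_comm, smul_mul_assoc]

end Stmt13Aux
open Matrix Kronecker

-- needed defs from statement file

namespace Stmt13Aux

section PiMat
variable {N K : ℕ}

lemma pi_lie_apply (f g : Fin K → Matrix (Fin N) (Fin N) ℂ) (k : Fin K) :
    ⁅f, g⁆ k = ⁅f k, g k⁆ := rfl

lemma lie_smul_fun (w w' : Fin K → ℝ) (x y : Matrix (Fin N) (Fin N) ℂ) :
    ⁅(fun k => w k • x : Fin K → Matrix (Fin N) (Fin N) ℂ), fun k => w' k • y⁆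
      = fun k => (w k * w' k) • ⁅x, y⁆ := by
  funext k
  rw [pi_lie_apply, smul_lie, lie_smul, smul_smul]

lemma const_lie_single (x y : Matrix (Fin N) (Fin N) ℂ) (k₀ : Fin K) :
    ⁅(fun _ : Fin K => x), (Pi.single k₀ y : Fin K → Matrix (Fin N) (Fin N) ℂ)⁆ = Pi.single k₀ ⁅x, y⁆ := by
  funext k
  rw [pi_lie_apply]
  rcases eq_or_ne k k₀ with h | h
  · subst h; rw [Pi.single_eq_same, Pi.single_eq_same]
  · rw [Pi.single_eq_of_ne h, Pi.single_eq_of_ne h, lie_zero]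

lemma single_lie_single (x y : Matrix (Fin N) (Fin N) ℂ) (k₀ : Fin K) :
    ⁅(Pi.single k₀ x : Fin K → Matrix (Fin N) (Fin N) ℂ), (Pi.single k₀ y : Fin K → Matrix (Fin N) (Fin N) ℂ)⁆
      = Pi.single k₀ ⁅x, y⁆ := by
  funext k
  rw [pi_lie_apply]
  rcases eq_or_ne k k₀ with h | h
  · subst h; rw [Pi.single_eq_same, Pi.single_eq_same, Pi.single_eq_same]
  · rw [Pi.single_eq_of_ne h, Pi.single_eq_of_ne h, Pi.single_eq_of_ne h, lie_zero]

end PiMat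

section Brackets
variable {N : ℕ}

lemma lie_lie_self {a s : Matrix (Fin N) (Fin N) ℂ} (ha : a * a = -1)
    (h : s * a = -(a * s)) : ⁅a, ⁅a, s⁆⁆ = (-4 : ℝ) • s := by
  have e1 : a * s * a = s := by
    rw [mul_assoc, h, mul_neg, ← mul_assoc, ha, neg_mul, one_mul, neg_neg]
  have expand : ⁅a, ⁅a, s⁆⁆ = a * a * s - (a * s * a + a * s * a) + s * (a * a) := by
    simp only [Ring.lie_def]
    noncomm_ring
  rw [expand, e1, ha, neg_one_mul, mul_neg_one]
  module

lemma lie_lie_other {a s : Matrix (Fin N) (Fin N) ℂ} (hs : s * s = -1)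
    (h : s * a = -(a * s)) : ⁅s, ⁅a, s⁆⁆ = (4 : ℝ) • a := by
  have e1 : s * a * s = a := by
    rw [h, neg_mul, mul_assoc, hs, mul_neg, mul_one, neg_neg]
  have expand : ⁅s, ⁅a, s⁆⁆ = (s * a * s + s * a * s) - s * s * a - a * (s * s) := by
    simp only [Ring.lie_def]
    noncomm_ring
  rw [expand, e1, hs, neg_one_mul, mul_neg_one]
  module

end Brackets

section Graph
variable {l N : ℕ} (A : Fin l → Matrix (Fin N) (Fin N) ℂ)

lemma adj_anticomm {u v : Fin l} (h : (anticommGraph A).Adj u v) :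
    A v * A u = -(A u * A v) := by
  rcases ((SimpleGraph.fromRel_adj _ u v).mp h).2 with h' | h'
  · rw [h', neg_neg]
  · exact h'

lemma exists_adj (hl : 2 ≤ l) (hconn : (anticommGraph A).Connected) (i : Fin l) :
    ∃ j, (anticommGraph A).Adj i j := by
  obtain ⟨j, hj⟩ := Fintype.exists_ne_of_one_lt_card (by rw [Fintype.card_fin]; omega) i
  obtain ⟨w⟩ := hconn.preconnected i j
  cases w with
  | nil => exact absurd rfl hj
  | cons h _ => exact ⟨_, h⟩

end Graph

end Stmt13Aux
open Matrix Kronecker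

namespace Stmt13Aux

section Psi
variable {N M K : ℕ}

lemma kron_one_eq_blockDiagonal (X : Matrix (Fin N) (Fin N) ℂ) :
    X ⊗ₖ (1 : Matrix (Fin M) (Fin M) ℂ) = blockDiagonal (fun _ : Fin M => X) := by
  ext ⟨a, m⟩ ⟨b, m'⟩
  simp only [kroneckerMap_apply, blockDiagonal_apply, Matrix.one_apply]
  split <;> simp

lemma kron_diagonal_eq_blockDiagonal (X : Matrix (Fin N) (Fin N) ℂ) (v : Fin M → ℝ) :
    X ⊗ₖ (diagonal fun m => (v m : ℂ)) = blockDiagonal (fun m : Fin M => v m • X) := by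
  ext ⟨a, m⟩ ⟨b, m'⟩
  simp only [kroneckerMap_apply, blockDiagonal_apply, Matrix.diagonal_apply]
  split <;> simp [Complex.real_smul, mul_comm]

/-- The block-diagonal embedding of `K` copies of the `N×N` matrices into
`(N*M)×(N*M)` matrices, with block `m` given by the component `c m`. -/
def psi (N : ℕ) {M K : ℕ} (c : Fin M → Fin K) :
    (Fin K → Matrix (Fin N) (Fin N) ℂ) →ₗ⁅ℝ⁆ Matrix (Fin N × Fin M) (Fin N × Fin M) ℂ where
  toFun f := blockDiagonal fun m => f (c m)
  map_add' f g := by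
    show blockDiagonal ((fun m => f (c m)) + fun m => g (c m)) = _
    rw [blockDiagonal_add]
  map_smul' t f := by
    show blockDiagonal (t • fun m => f (c m)) = _
    rw [blockDiagonal_smul]
    rfl
  map_lie' {f g} := by
    show blockDiagonal (fun m => ⁅f, g⁆ (c m))
        = ⁅blockDiagonal fun m => f (c m), blockDiagonal fun m => g (c m)⁆
    simp only [Ring.lie_def]
    show blockDiagonal ((fun m => f (c m) * g (c m)) - fun m => g (c m) * f (c m)) = _
    rw [blockDiagonal_sub, blockDiagonal_mul, blockDiagonal_mul]

lemma psi_apply (c : Fin M → Fin K) (f : Fin K → Matrix (Fin N) (Fin N) ℂ) :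
    psi N c f = blockDiagonal fun m => f (c m) := rfl

lemma psi_injective (c : Fin M → Fin K) (hc : Function.Surjective c) :
    Function.Injective (psi N c) := by
  intro f g hfg
  funext k
  obtain ⟨m, rfl⟩ := hc k
  ext a b
  have h2 : (psi N c f : Matrix (Fin N × Fin M) (Fin N × Fin M) ℂ) = psi N c g := hfg
  have := congrFun (congrFun h2 (a, m)) (b, m)
  simpa [psi_apply, blockDiagonal_apply] using this
end Psi
end Stmt13Aux
open Matrix Kronecker
open scoped DirectSum

namespace Stmt13Aux


section Subalgebras
variable {N K : ℕ}

/-- Constant-function embedding as a Lie algebra morphism. -/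
def constLieHom (N K : ℕ) :
    Matrix (Fin N) (Fin N) ℂ →ₗ⁅ℝ⁆ (Fin K → Matrix (Fin N) (Fin N) ℂ) where
  toFun x := fun _ => x
  map_add' _ _ := rfl
  map_smul' _ _ := rfl
  map_lie' := rfl

/-- The product of `K` copies of a Lie subalgebra `g`, inside the product algebra. -/
def piSubalg (K : ℕ) {n : Type*} [Fintype n] [DecidableEq n]
    (g : LieSubalgebra ℝ (Matrix n n ℂ)) : LieSubalgebra ℝ (Fin K → Matrix n n ℂ) where
  carrier := {f | ∀ k, f k ∈ g}
  add_mem' hx hy k := g.add_mem (hx k) (hy k)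
  zero_mem' k := g.zero_mem
  smul_mem' t x hx k := g.smul_mem t (hx k)
  lie_mem' hx hy k := g.lie_mem (hx k) (hy k)

lemma mem_piSubalg {n : Type*} [Fintype n] [DecidableEq n]
    (g : LieSubalgebra ℝ (Matrix n n ℂ)) (f : Fin K → Matrix n n ℂ) :
    f ∈ piSubalg K g ↔ ∀ k, f k ∈ g := Iff.rfl

/-- Elements all of whose "single-coordinate" embeddings lie in a given subalgebra of the
product. -/
def singleSub (hS : LieSubalgebra ℝ (Fin K → Matrix (Fin N) (Fin N) ℂ)) :
    LieSubalgebra ℝ (Matrix (Fin N) (Fin N) ℂ) where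
  carrier := {x | ∀ k₀ : Fin K, (Pi.single k₀ x : Fin K → Matrix (Fin N) (Fin N) ℂ) ∈ hS}
  add_mem' {x y} hx hy k₀ := by
    rw [Pi.single_add]; exact hS.add_mem (hx k₀) (hy k₀)
  zero_mem' k₀ := by rw [Pi.single_zero]; exact hS.zero_mem
  smul_mem' t x hx k₀ := by
    rw [Pi.single_smul]; exact hS.smul_mem t (hx k₀)
  lie_mem' {x y} hx hy k₀ := by
    rw [← single_lie_single]; exact hS.lie_mem (hx k₀) (hy k₀)

lemma mem_singleSub (hS : LieSubalgebra ℝ (Fin K → Matrix (Fin N) (Fin N) ℂ))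
    (x : Matrix (Fin N) (Fin N) ℂ) :
    x ∈ singleSub hS ↔ ∀ k₀ : Fin K, (Pi.single k₀ x : Fin K → Matrix (Fin N) (Fin N) ℂ) ∈ hS :=
  Iff.rfl

/-- Coefficient functions `w` such that `k ↦ w k • s` lies in a given subalgebra. -/
def coefSub (hS : LieSubalgebra ℝ (Fin K → Matrix (Fin N) (Fin N) ℂ))
    (s : Matrix (Fin N) (Fin N) ℂ) : Submodule ℝ (Fin K → ℝ) where
  carrier := {w | (fun k => w k • s) ∈ hS}
  add_mem' {w w'} hw hw' := by
    have he : (fun k => (w + w') k • s) = (fun k => w k • s) + fun k => w' k • s := by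
      funext k; simp [add_smul]
    show (fun k => (w + w') k • s) ∈ hS
    rw [he]; exact hS.add_mem hw hw'
  zero_mem' := by
    show (fun k => (0 : Fin K → ℝ) k • s) ∈ hS
    have he : (fun k => (0 : Fin K → ℝ) k • s) = 0 := by funext k; simp
    rw [he]; exact hS.zero_mem
  smul_mem' t w hw := by
    show (fun k => (t • w) k • s) ∈ hS
    have he : (fun k => (t • w) k • s) = t • fun k => w k • s := by
      funext k; exact (smul_smul t (w k) s).symm
    rw [he]; exact hS.smul_mem t hw

lemma mem_coefSub (hS : LieSubalgebra ℝ (Fin K → Matrix (Fin N) (Fin N) ℂ))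
    (s : Matrix (Fin N) (Fin N) ℂ) (w : Fin K → ℝ) :
    w ∈ coefSub hS s ↔ (fun k => w k • s) ∈ hS := Iff.rfl

end Subalgebras

section Equiv
variable {K : ℕ} {n : Type*} [Fintype n] [DecidableEq n]

/-- The product of `K` copies of `g` is isomorphic to the direct sum of `K` copies of `g`. -/
noncomputable def piEquivDirectSum (K : ℕ) (g : LieSubalgebra ℝ (Matrix n n ℂ)) :
    piSubalg K g ≃ₗ⁅ℝ⁆ ⨁ _ : Fin K, g where
  toFun f := DFinsupp.equivFunOnFintype.symm fun k => (⟨f.1 k, f.2 k⟩ : g)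
  invFun x := ⟨fun k => (x k : Matrix n n ℂ), fun k => (x k).2⟩
  left_inv f := Subtype.ext rfl
  right_inv x := DFinsupp.ext fun k => Subtype.ext rfl
  map_add' f f' := DFinsupp.ext fun k => by
    rw [DFinsupp.add_apply]; exact Subtype.ext rfl
  map_smul' t f := DFinsupp.ext fun k => by
    rw [DFinsupp.smul_apply]; exact Subtype.ext rfl
  map_lie' {f f'} := DFinsupp.ext fun k => by
    rw [DirectSum.bracket_apply]; exact Subtype.ext rfl

end Equiv

end Stmt13Aux
namespace Stmt13Aux

theorem core {l N K : ℕ} (A : Fin l → Matrix (Fin N) (Fin N) ℂ)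
    (hl : 2 ≤ l)
    (hsq : ∀ j, A j * A j = -1)
    (hconn : (anticommGraph A).Connected) (i : Fin l)
    (μ : Fin K → ℝ) (hμ : Function.Injective μ) :
    LieSubalgebra.lieSpan ℝ (Fin K → Matrix (Fin N) (Fin N) ℂ)
        ((Set.range fun j (_ : Fin K) => A j) ∪ {fun k => μ k • A i}) =
      piSubalg K (DLA (Set.range A)) := by
  classical
  set g : LieSubalgebra ℝ (Matrix (Fin N) (Fin N) ℂ) := DLA (Set.range A) with hgdef
  set hS : LieSubalgebra ℝ (Fin K → Matrix (Fin N) (Fin N) ℂ) :=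
    LieSubalgebra.lieSpan ℝ (Fin K → Matrix (Fin N) (Fin N) ℂ)
      ((Set.range fun j (_ : Fin K) => A j) ∪ {fun k => μ k • A i}) with hSdef
  have hAg : ∀ j, A j ∈ g := fun j => LieSubalgebra.subset_lieSpan ⟨j, rfl⟩
  -- the diagonal embedding sends g into hS
  have hconst : ∀ x ∈ g, (fun _ : Fin K => x) ∈ hS := by
    intro x hx
    have hle : g ≤ hS.comap (constLieHom N K) := by
      rw [hgdef]
      apply LieSubalgebra.lieSpan_le.mpr
      rintro _ ⟨j, rfl⟩
      exact LieSubalgebra.subset_lieSpan (Or.inl ⟨j, rfl⟩)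
    exact hle hx
  have hv : (fun k => μ k • A i) ∈ hS := LieSubalgebra.subset_lieSpan (Or.inr rfl)
  -- neighbour of i in the anticommutation graph
  obtain ⟨j₀, hadj⟩ := exists_adj A hl hconn i
  have hsa : A i * A j₀ = -(A j₀ * A i) := by
    have h := adj_anticomm A hadj
    rw [h, neg_neg]
  -- powers of μ times A i belong to hS
  have hpow : ∀ n : ℕ, (fun k => (μ k ^ (n + 1)) • A i) ∈ hS := by
    intro n
    induction n with
    | zero => simpa [pow_one] using hv
    | succ n ih =>
      have hΔa : (fun _ : Fin K => A j₀) ∈ hS := hconst _ (hAg j₀)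
      have hΔs : (fun _ : Fin K => A i) ∈ hS := hconst _ (hAg i)
      have r1 : (fun k => μ k • ⁅A j₀, A i⁆) ∈ hS := by
        have hh := hS.lie_mem hΔa hv
        have heq : ⁅(fun _ : Fin K => A j₀), fun k => μ k • A i⁆
            = fun k => μ k • ⁅A j₀, A i⁆ := by
          funext k
          rw [pi_lie_apply, lie_smul]
        rwa [heq] at hh
      -- μ^(n+2) • A j₀ ∈ hS
      have t1 : (fun k => (μ k ^ (n + 2)) • A j₀) ∈ hS := by
        have hh := hS.lie_mem ih r1
        rw [lie_smul_fun (fun k => μ k ^ (n + 1)) μ (A i) ⁅A j₀, A i⁆] at hh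
        rw [lie_lie_other (hsq i) hsa] at hh
        have hh2 := hS.smul_mem ((1 : ℝ)/4) hh
        have heq : ((1 : ℝ)/4) • (fun k => (μ k ^ (n + 1) * μ k) • ((4 : ℝ) • A j₀))
            = fun k => (μ k ^ (n + 2)) • A j₀ := by
          funext k
          rw [Pi.smul_apply, smul_smul, smul_smul]
          congr 1
          ring
        rwa [heq] at hh2
      -- μ^(n+2) • ⁅A j₀, A i⁆ ∈ hS
      have u1 : (fun k => (μ k ^ (n + 2)) • ⁅A j₀, A i⁆) ∈ hS := by
        have hh := hS.lie_mem t1 hΔs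
        have heq : ⁅(fun k => (μ k ^ (n + 2)) • A j₀), (fun _ : Fin K => A i)⁆
            = fun k => (μ k ^ (n + 2)) • ⁅A j₀, A i⁆ := by
          funext k
          rw [pi_lie_apply, smul_lie]
        rwa [heq] at hh
      -- conclude
      have hh := hS.lie_mem hΔa u1
      have heq : ⁅(fun _ : Fin K => A j₀), fun k => (μ k ^ (n + 2)) • ⁅A j₀, A i⁆⁆
          = fun k => (μ k ^ (n + 2)) • ⁅A j₀, ⁅A j₀, A i⁆⁆ := by
        funext k
        rw [pi_lie_apply, lie_smul]
      rw [heq, lie_lie_self (hsq j₀) hsa] at hh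
      have hh2 := hS.smul_mem (-(1 : ℝ)/4) hh
      have heq2 : (-(1 : ℝ)/4) • (fun k => (μ k ^ (n + 2)) • ((-4 : ℝ) • A i))
          = fun k => (μ k ^ (n + 1 + 1)) • A i := by
        funext k
        rw [Pi.smul_apply, smul_smul, smul_smul]
        congr 1
        ring
      rwa [heq2] at hh2
  have hpow' : ∀ n : ℕ, (fun k => (μ k ^ n)) ∈ coefSub hS (A i) := by
    intro n
    cases n with
    | zero =>
      show (fun k => (μ k ^ 0 : ℝ) • A i) ∈ hS
      have heq : (fun k => (μ k ^ 0 : ℝ) • A i) = fun _ : Fin K => A i := by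
        funext k; rw [pow_zero, one_smul]
      rw [heq]
      exact hconst _ (hAg i)
    | succ n => exact hpow n
  -- Lagrange interpolation: single-coordinate copies of A i
  have hsingle : ∀ k₀ : Fin K,
      (Pi.single k₀ (A i) : Fin K → Matrix (Fin N) (Fin N) ℂ) ∈ hS := by
    intro k₀
    set q : Polynomial ℝ := Lagrange.basis Finset.univ μ k₀ with hq
    have hmem : (fun k => Polynomial.eval (μ k) q) ∈ coefSub hS (A i) := by
      have heq : (fun k => Polynomial.eval (μ k) q)
          = ∑ n ∈ Finset.range (q.natDegree + 1), q.coeff n • fun k => μ k ^ n := by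
        funext k
        rw [Finset.sum_apply]
        rw [Polynomial.eval_eq_sum_range]
        simp [smul_eq_mul]
      rw [heq]
      exact Submodule.sum_mem _ fun n _ => Submodule.smul_mem _ _ (hpow' n)
    have hmem2 : (fun k => Polynomial.eval (μ k) q • A i) ∈ hS := hmem
    have heval : (fun k => Polynomial.eval (μ k) q • A i)
        = (Pi.single k₀ (A i) : Fin K → Matrix (Fin N) (Fin N) ℂ) := by
      funext k
      rcases eq_or_ne k k₀ with h | h
      · subst h
        rw [hq, Lagrange.eval_basis_self hμ.injOn (Finset.mem_univ _), one_smul,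
          Pi.single_eq_same]
      · rw [hq, Lagrange.eval_basis_of_ne (Ne.symm h) (Finset.mem_univ _), zero_smul,
          Pi.single_eq_of_ne h]
    rwa [heval] at hmem2
  -- the singles subalgebra absorbs brackets with g and contains all generators
  have hgT : ∀ x ∈ g, ∀ y ∈ singleSub hS, ⁅x, y⁆ ∈ singleSub hS := by
    intro x hx y hy k₀
    have hh := hS.lie_mem (hconst x hx) (hy k₀)
    rwa [const_lie_single] at hh
  have hstep : ∀ u v : Fin l, (anticommGraph A).Adj u v →
      A u ∈ singleSub hS → A v ∈ singleSub hS := by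
    intro u v huv hu
    have hanti : A v * A u = -(A u * A v) := adj_anticomm A huv
    have h1 : ⁅A v, A u⁆ ∈ singleSub hS := hgT _ (hAg v) _ hu
    have h2 : ⁅A u, ⁅A u, A v⁆⁆ ∈ singleSub hS := by
      have hswap : ⁅A u, A v⁆ = -⁅A v, A u⁆ := by rw [← lie_skew]
      rw [hswap, lie_neg]
      exact neg_mem (hgT _ (hAg u) _ h1)
    have h4 := (singleSub hS).smul_mem (-(1 : ℝ)/4) h2
    have heq : (-(1 : ℝ)/4) • ⁅A u, ⁅A u, A v⁆⁆ = A v := by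
      rw [lie_lie_self (hsq u) hanti, smul_smul]
      have : (-(1 : ℝ)/4) * (-4) = 1 := by norm_num
      rw [this, one_smul]
    rwa [heq] at h4
  have hall : ∀ j : Fin l, A j ∈ singleSub hS := by
    have key : ∀ (u v : Fin l), (anticommGraph A).Walk u v →
        A u ∈ singleSub hS → A v ∈ singleSub hS := by
      intro u v w
      induction w with
      | nil => exact id
      | cons h _ ih => exact fun hu => ih (hstep _ _ h hu)
    intro j
    exact key i j ((hconn.preconnected i j).some) hsingle
  have hgsub : g ≤ singleSub hS := by
    rw [hgdef]
    apply LieSubalgebra.lieSpan_le.mpr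
    rintro _ ⟨j, rfl⟩
    exact hall j
  -- finish by antisymmetry
  apply le_antisymm
  · apply LieSubalgebra.lieSpan_le.mpr
    rintro x (⟨j', rfl⟩ | rfl)
    · exact fun k => hAg j'
    · exact fun k => g.smul_mem _ (hAg i)
  · intro f hf
    have hsum : f = ∑ k, Pi.single k (f k) := (Finset.univ_sum_single f).symm
    rw [hsum]
    exact sum_mem fun k _ => hgsub (hf k) k

end Stmt13Aux

open Stmt13Aux

/-- If `𝒜 = {A₁, …, A_L}` is a dynamical generating set with `A_j² = -I`, any two members
commuting or anticommuting, and connected anticommutation graph (e.g. a connected Pauli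
generating set), then for each `i`, adjoining `A_i ⊗ χ` to `{A_j ⊗ I_M}` generates a DLA
isomorphic to the direct sum of `K` copies of `g_𝒜`, where `χ` is Hermitian with exactly
`K` distinct eigenvalues. -/
theorem stmt13 {l N M K : ℕ} (A : Fin l → Matrix (Fin N) (Fin N) ℂ)
    (hA : IsDynGenSet A)
    (hsq : ∀ j, A j ^ 2 = -1)
    (hcomm : ∀ j k, A j * A k = A k * A j ∨ A j * A k = -(A k * A j))
    (hconn : (anticommGraph A).Connected)
    (χ : Matrix (Fin M) (Fin M) ℂ) (hχ : χ.IsHermitian)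
    (hK : (spectrum ℂ χ).ncard = K) :
    ∀ i : Fin l,
      Nonempty
        (↥(DLA ((Set.range fun j => A j ⊗ₖ (1 : Matrix (Fin M) (Fin M) ℂ)) ∪
            {A i ⊗ₖ χ})) ≃ₗ⁅ℝ⁆
          (⨁ _ : Fin K, ↥(DLA (Set.range A)))) := by
  intro i
  classical
  -- eigenvalue bookkeeping
  set d : Fin M → ℝ := hχ.eigenvalues with hd
  have hspec : spectrum ℂ χ = Set.range ((↑) ∘ d : Fin M → ℂ) := by
    have h := congrArg (spectrum ℂ) hχ.spectral_theorem
    rwa [Unitary.conjStarAlgAut_apply, Unitary.spectrum_star_right_conjugate,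
      spectrum_diagonal] at h
  have hKrange : (Set.range d).ncard = K := by
    rw [← hK, hspec, Set.range_comp, Set.ncard_image_of_injective _ Complex.ofReal_injective]
  set sF : Finset ℝ := Finset.image d Finset.univ with hsF
  have hcard : sF.card = K := by
    rw [← hKrange, show Set.range d = ↑sF by rw [hsF, Finset.coe_image, Finset.coe_univ,
      Set.image_univ], Set.ncard_coe_finset]
  have hcard' : Fintype.card ↥sF = K := by rw [Fintype.card_coe, hcard]
  set eF : ↥sF ≃ Fin K := Fintype.equivFinOfCardEq hcard' with heF
  set μ : Fin K → ℝ := fun k => ((eF.symm k : ↥sF) : ℝ) with hμdef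
  have hμinj : Function.Injective μ := by
    intro k k' h
    have := eF.symm.injective (Subtype.ext h)
    exact this
  have hdm : ∀ m, d m ∈ sF := fun m => Finset.mem_image_of_mem d (Finset.mem_univ m)
  set c : Fin M → Fin K := fun m => eF ⟨d m, hdm m⟩ with hc
  have hdc : ∀ m, μ (c m) = d m := by
    intro m
    rw [hμdef, hc]
    simp
  have hcsurj : Function.Surjective c := by
    intro k
    have hmem : (μ k) ∈ sF := (eF.symm k).2
    obtain ⟨m, _, hm⟩ := Finset.mem_image.mp hmem
    refine ⟨m, ?_⟩
    rw [hc]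
    show eF ⟨d m, hdm m⟩ = k
    have hsub : (⟨d m, hdm m⟩ : ↥sF) = eF.symm k := Subtype.ext hm
    rw [hsub, Equiv.apply_symm_apply]
  -- unitary conjugation
  set U : Matrix (Fin M) (Fin M) ℂ := ↑hχ.eigenvectorUnitary with hU
  have hU1 : star U * U = 1 := (Unitary.mem_iff.mp hχ.eigenvectorUnitary.2).1
  have hU2 : U * star U = 1 := (Unitary.mem_iff.mp hχ.eigenvectorUnitary.2).2
  set w : (Matrix (Fin N × Fin M) (Fin N × Fin M) ℂ)ˣ :=
    { val := (1 : Matrix (Fin N) (Fin N) ℂ) ⊗ₖ (star U)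
      inv := (1 : Matrix (Fin N) (Fin N) ℂ) ⊗ₖ U
      val_inv := by rw [← Matrix.mul_kronecker_mul, one_mul, hU1, Matrix.one_kronecker_one]
      inv_val := by rw [← Matrix.mul_kronecker_mul, one_mul, hU2, Matrix.one_kronecker_one] }
    with hw
  set eh : Matrix (Fin N × Fin M) (Fin N × Fin M) ℂ →ₗ⁅ℝ⁆
      Matrix (Fin N × Fin M) (Fin N × Fin M) ℂ := (conjAut w).toLieEquiv.toLieHom with heh
  have ehapp : ∀ X, eh X = ((1 : Matrix (Fin N) (Fin N) ℂ) ⊗ₖ (star U)) * X *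
      ((1 : Matrix (Fin N) (Fin N) ℂ) ⊗ₖ U) := fun X => rfl
  have einj : Function.Injective eh := fun x y hxy => (conjAut w).injective hxy
  -- image of the generators
  have himg : ⇑eh '' ((Set.range fun j => A j ⊗ₖ (1 : Matrix (Fin M) (Fin M) ℂ)) ∪ {A i ⊗ₖ χ})
      = ⇑(psi N c) '' ((Set.range fun j (_ : Fin K) => A j) ∪ {fun k => μ k • A i}) := by
    rw [Set.image_union, Set.image_singleton, Set.image_union, Set.image_singleton,
      ← Set.range_comp, ← Set.range_comp]
    congr 1
    · apply congrArg Set.range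
      funext j
      show eh (A j ⊗ₖ (1 : Matrix (Fin M) (Fin M) ℂ)) = psi N c fun _ => A j
      rw [ehapp, ← Matrix.mul_kronecker_mul, ← Matrix.mul_kronecker_mul, one_mul, mul_one,
        mul_one, hU1, psi_apply, ← kron_one_eq_blockDiagonal]
    · apply congrArg  (fun x => ({x} : Set _))
      show eh (A i ⊗ₖ χ) = psi N c fun k => μ k • A i
      rw [ehapp, ← Matrix.mul_kronecker_mul, ← Matrix.mul_kronecker_mul, one_mul, mul_one]
      rw [show star U * χ * U = diagonal (RCLike.ofReal ∘ d) from
        (Unitary.conjStarAlgAut_star_apply (S := ℂ) _ _).symm.trans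
          hχ.conjStarAlgAut_star_eigenvectorUnitary]
      rw [show (diagonal (RCLike.ofReal ∘ d) : Matrix (Fin M) (Fin M) ℂ)
        = diagonal fun m => ((d m : ℝ) : ℂ) from rfl]
      rw [kron_diagonal_eq_blockDiagonal, psi_apply]
      show Matrix.blockDiagonal (fun m : Fin M => d m • A i)
          = Matrix.blockDiagonal fun m : Fin M => μ (c m) • A i
      exact congrArg _ (funext fun m => by rw [hdc m])
  -- core identification
  have hpow2 : ∀ j, A j * A j = -1 := fun j => by
    have := hsq j; rwa [pow_two] at this
  have hcore := core A hA.1 hpow2 hconn i μ hμinj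
  have h1 : (DLA ((Set.range fun j => A j ⊗ₖ (1 : Matrix (Fin M) (Fin M) ℂ)) ∪
        {A i ⊗ₖ χ})).map eh = (piSubalg K (DLA (Set.range A))).map (psi N c) := by
    show (LieSubalgebra.lieSpan ℝ _ _).map eh = _
    rw [map_lieSpan, himg, ← map_lieSpan, hcore]
  refine ⟨?_⟩
  exact (((equivMap eh einj _).trans (LieEquiv.ofEq _ _ (by rw [h1]))).trans
    ((equivMap (psi N c) (psi_injective c hcsurj) _).symm)).trans
    (piEquivDirectSum K (DLA (Set.range A)))
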